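/- In the complete bipartite graph K_{r,s} with parts R (|R| = r) and S (|S| = s), s > r > 1, fix v_1 ∈ R. The maximum of Σ_{w ∈ S} x_w + Σ_{e ∈ E} y_e over characteristic vectors of total matchings T containing v_1 and containing no other vertex of R equals r − 1. -/

import Mathlib

/-- A total matching of `G`, given by its vertex part `S` and edge part `M`:
all elements pairwise non-adjacent. -/
def IsTotalMatching {V : Type*} (G : SimpleGraph V) (S : Finset V) (M : Finset (Sym2 V)) : Prop :=
  (∀ e ∈ M, e ∈ G.edgeSet) ∧
  (∀ u ∈ S, ∀ v ∈ S, ¬ G.Adj u v) ∧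
  (∀ e ∈ M, ∀ f ∈ M, e ≠ f → ∀ v : V, ¬ (v ∈ e ∧ v ∈ f)) ∧
  (∀ v ∈ S, ∀ e ∈ M, v ∉ e)

/-- The total matching number ν_T(G). -/
noncomputable def totalMatchingNumber {V : Type*} (G : SimpleGraph V) : ℕ :=
  sSup {n | ∃ S M, IsTotalMatching G S M ∧ S.card + M.card = n}

/-- In `K_{r,s}` (`s > r > 1`) with a fixed `v₁ ∈ R`, the maximum of
`Σ_{w ∈ S} x_w + Σ_e y_e` over total matchings containing `v₁` and no other vertex of `R`
equals `r - 1`. -/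
theorem lifting_coefficient_max (r s : ℕ) (hr : 1 < r) (hrs : r < s) (v₁ : Fin r) :
    IsGreatest {n : ℕ | ∃ S M, IsTotalMatching (completeBipartiteGraph (Fin r) (Fin s)) S M ∧
      Sum.inl v₁ ∈ S ∧ (∀ u : Fin r, Sum.inl u ∈ S → u = v₁) ∧
      n = (S.filter (fun a => a.isRight)).card + M.card} (r - 1) := by
  classical
  constructor
  · -- membership
    refine ⟨{Sum.inl v₁},
      (Finset.univ.filter (· ≠ v₁)).image
        (fun u => s(Sum.inl u, Sum.inr (⟨u.val, u.isLt.trans hrs⟩ : Fin s))), ?_, ?_, ?_, ?_⟩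
    · refine ⟨?_, ?_, ?_, ?_⟩
      · intro e he
        simp only [Finset.mem_image, Finset.mem_filter] at he
        obtain ⟨u, _, rfl⟩ := he
        simp [SimpleGraph.mem_edgeSet]
      · intro u hu v hv
        simp only [Finset.mem_singleton] at hu hv
        subst hu; subst hv
        exact (completeBipartiteGraph (Fin r) (Fin s)).irrefl
      · intro e he f hf hef v hv
        simp only [Finset.mem_image, Finset.mem_filter] at he hf
        obtain ⟨u, _, rfl⟩ := he
        obtain ⟨w, _, rfl⟩ := hf
        obtain ⟨hv1, hv2⟩ := hv
        simp only [Sym2.mem_iff] at hv1 hv2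
        rcases hv1 with rfl | rfl <;> rcases hv2 with h | h <;>
          simp_all [Fin.ext_iff]
      · intro v hv e he
        simp only [Finset.mem_singleton] at hv
        subst hv
        simp only [Finset.mem_image, Finset.mem_filter] at he
        obtain ⟨u, ⟨_, hu⟩, rfl⟩ := he
        simp only [Sym2.mem_iff]
        rintro (h | h)
        · exact hu (Sum.inl.inj h.symm)
        · exact absurd h (by simp)
    · simp
    · intro u hu
      simpa using hu
    · have h0 : Finset.filter (fun a => a.isRight = true)
          ({Sum.inl v₁} : Finset (Fin r ⊕ Fin s)) = ∅ := by
        rw [Finset.filter_eq_empty_iff]; simp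
      rw [h0, Finset.card_empty, Nat.zero_add, Finset.card_image_of_injOn,
        Finset.filter_ne', Finset.card_erase_of_mem (by simp), Finset.card_univ, Fintype.card_fin]
      intro a _ b _ hab
      simp only [Sym2.eq_iff] at hab
      rcases hab with ⟨h, _⟩ | ⟨h, _⟩
      · exact Sum.inl.inj h
      · exact absurd h (by simp)
  · -- upper bound
    rintro n ⟨S, M, ⟨hedge, hvv, hee, hve⟩, hv₁, honly, rfl⟩
    have hright : S.filter (fun a => a.isRight) = ∅ := by
      rw [Finset.filter_eq_empty_iff]
      rintro (a | b) hmem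
      · simp
      · intro _
        exact hvv _ hv₁ _ hmem (by simp)
    rw [hright]
    simp only [Finset.card_empty, zero_add]
    -- each edge has a unique left endpoint, distinct from v₁
    have key : ∀ e ∈ M, ∃ a : Fin r, Sum.inl a ∈ e := by
      intro e he
      have := hedge e he
      induction e using Sym2.ind with
      | _ x y =>
        rw [SimpleGraph.mem_edgeSet] at this
        rcases x with a | b <;> rcases y with a' | b' <;> simp_all
    set f : Sym2 (Fin r ⊕ Fin s) → Fin r := fun e =>
      if h : ∃ a : Fin r, Sum.inl a ∈ e then h.choose else v₁ with hf
    have hmemf : ∀ e ∈ M, Sum.inl (f e) ∈ e := by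
      intro e he
      have h := key e he
      simp only [hf, dif_pos h]
      exact h.choose_spec
    have hle : M.card ≤ (Finset.univ.erase v₁ : Finset (Fin r)).card := by
      apply Finset.card_le_card_of_injOn f
      · intro e he
        simp only [Finset.mem_coe, Finset.mem_erase, Finset.mem_univ, and_true]
        intro h
        exact hve _ hv₁ e he (h ▸ hmemf e he)
      · intro e he e' he' hfe
        by_contra hne
        exact hee e he e' he' hne (Sum.inl (f e)) ⟨hmemf e he, hfe ▸ hmemf e' he'⟩
    calc M.card ≤ (Finset.univ.erase v₁ : Finset (Fin r)).card := hle
      _ = r - 1 := by simp
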